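/- arXiv:2306.15871 — 2 statements merged into one kernel-verified Lean document; each statement's English description precedes it below -/
import Mathlib

section
/- Top-order equicontinuity suffices in C^m (Corollary 1.10). Let K ⊆ ℝ^d be a compact set that is the closure of a bounded open set satisfying the uniform C^m regularity condition (in the sense of Adams), and let F be a subset of C^m(K). Suppose (a) there exists M > 0 such that ‖f‖_{C^m(K)} ≤ M for every f ∈ F, and (b) for every ε > 0 there exists δ > 0 such that max_{|α|=m} |(D^α f)(x₁) − (D^α f)(x₂)| < ε for every f ∈ F and all x₁, x₂ ∈ K with |x₁ − x₂| < δ. Then F is equicontinuous with all derivatives up to order m, i.e., for every ε > 0 there exists δ' > 0 such that max_{|α|≤m} |(D^α f)(x₁) − (D^α f)(x₂)| < ε for every f ∈ F and all x₁, x₂ ∈ K with |x₁ − x₂| < δ'; consequently F is precompact in C^m(K). -/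
open MeasureTheory Set
open scoped ENNReal NNReal

noncomputable section

abbrev Euc (d : ℕ) : Type := EuclideanSpace ℝ (Fin d)

/-- Multi-indices. -/
abbrev MIdx (d : ℕ) : Type := Fin d → ℕ

/-- The order `|α|` of a multi-index. -/
def mOrder {d : ℕ} (α : MIdx d) : ℕ := ∑ i, α i

/-- Classical partial derivative in direction `i`, within a set `S`. -/
def pderivW {d : ℕ} (i : Fin d) (S : Set (Euc d)) (f : Euc d → ℝ) : Euc d → ℝ :=
  fun x => fderivWithin ℝ f S x (EuclideanSpace.single i 1)

/-- Classical iterated partial derivative `D^α` within a set `S`. -/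
def mderivW {d : ℕ} (α : MIdx d) (S : Set (Euc d)) (f : Euc d → ℝ) : Euc d → ℝ :=
  (List.finRange d).foldr (fun i g => (pderivW i S)^[α i] g) f

/-- The (finite) type of multi-indices of order at most `k`. -/
def Idx (d k : ℕ) : Type := {α : MIdx d // mOrder α ≤ k}

instance (d k : ℕ) : DecidableEq (Idx d k) := by unfold Idx; infer_instance

instance (d k : ℕ) : Fintype (Idx d k) :=
  Fintype.ofInjective
    (fun a : Idx d k => fun i : Fin d =>
      (⟨a.1 i, Nat.lt_succ_of_le (le_trans
        (Finset.single_le_sum (f := a.1) (fun j _ => Nat.zero_le _) (Finset.mem_univ i))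
        a.2)⟩ : Fin (k + 1)))
    (fun a b h => Subtype.ext (funext fun i => congrArg (fun f => ((f i : Fin (k+1)) : ℕ)) h))

/-- The space `C^m(K)`, realized as tuples `(g_α)_{|α| ≤ m}` of continuous
functions on `K` (the restriction to `K` of the derivatives `D^α f`), with the
topology of uniform convergence of all derivatives of order at most `m`
(the product of the compact-open topologies, i.e. the `C^m(K)`-norm topology). -/
abbrev CmSpace (d m : ℕ) (K : Set (Euc d)) : Type := Idx d m → C(↥K, ℝ)

/-- A tuple `g ∈ CmSpace` genuinely comes from an `m`-times continuously
differentiable function on `K`: there is `f` with `f ∈ C^m(K)` such that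
`g α = (D^α f)|_K` for every `|α| ≤ m`. -/
def IsCmTuple {d : ℕ} (m : ℕ) (K : Set (Euc d)) (g : CmSpace d m K) : Prop :=
  ∃ f : Euc d → ℝ, ContDiffOn ℝ (m : ℕ∞) f K ∧
    ∀ (α : Idx d m) (x : ↥K), g α x = mderivW α.1 K f (x : Euc d)

/-- The uniform `C^m`-regularity condition of Adams ('Sobolev Spaces', 4.10) for a
(bounded) open set `Ω ⊆ ℝ^d`: there are a locally finite (here: with uniformly
bounded overlaps) sequence of open sets `U j` covering a boundary strip of `Ω`,
and `m`-smooth maps `Φ j : U j → B` with inverses `Ψ j`, mapping `U j ∩ Ω` onto a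
half ball, whose derivatives up to order `m` are uniformly bounded. -/
def UniformCmRegular {d : ℕ} (m : ℕ) (Ω : Set (Euc d)) : Prop :=
  ∃ (U : ℕ → Set (Euc d)) (Φ Ψ : ℕ → Euc d → Euc d) (M δ : ℝ) (R : ℕ) (i₀ : Fin d),
    0 < M ∧ 0 < δ ∧
    (∀ j, IsOpen (U j)) ∧
    -- the sets Ψ j (half ball) cover the δ-strip of Ω along its boundary
    ({x ∈ Ω | ∃ y ∈ frontier Ω, dist x y < δ} ⊆
      ⋃ j, Ψ j '' Metric.ball (0 : Euc d) (1/2)) ∧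
    -- uniformly locally finite
    (∀ x : Euc d, {j | x ∈ U j}.ncard ≤ R) ∧
    -- Φ j is a bijection from U j onto the unit ball, with inverse Ψ j,
    -- carrying U j ∩ Ω onto the upper half ball
    (∀ j, (∀ x ∈ U j, Ψ j (Φ j x) = x) ∧
      (∀ y ∈ Metric.ball (0 : Euc d) 1, Φ j (Ψ j y) = y) ∧
      Φ j '' U j = Metric.ball (0 : Euc d) 1 ∧
      Φ j '' (U j ∩ Ω) = {y ∈ Metric.ball (0 : Euc d) 1 | 0 < y i₀}) ∧
    -- m-smoothness with uniformly bounded derivatives up to order m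
    (∀ j, ContDiffOn ℝ (m : ℕ∞) (Φ j) (U j) ∧
      ContDiffOn ℝ (m : ℕ∞) (Ψ j) (Metric.ball (0 : Euc d) 1)) ∧
    (∀ j, ∀ n ≤ m,
      (∀ x ∈ U j, ‖iteratedFDerivWithin ℝ n (Φ j) (U j) x‖ ≤ M) ∧
      (∀ y ∈ Metric.ball (0 : Euc d) 1,
        ‖iteratedFDerivWithin ℝ n (Ψ j) (Metric.ball (0 : Euc d) 1) y‖ ≤ M))

open Metric Topology Filter

section PCalc
variable {d : ℕ} {Ω K : Set (Euc d)} (hΩ : IsOpen Ω) (hΩK : Ω ⊆ K)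
include hΩ hΩK

lemma mem_nhds_K {x : Euc d} (hx : x ∈ Ω) : K ∈ 𝓝 x :=
  Filter.mem_of_superset (hΩ.mem_nhds hx) hΩK

lemma pderivW_eq_fderiv (i : Fin d) (u : Euc d → ℝ) {x : Euc d} (hx : x ∈ Ω) :
    pderivW i K u x = fderiv ℝ u x (EuclideanSpace.single i 1) := by
  unfold pderivW
  rw [fderivWithin_of_mem_nhds (mem_nhds_K hΩ hΩK hx)]

lemma pderivW_congr {u v : Euc d → ℝ} (huv : EqOn u v Ω) (i : Fin d) :
    EqOn (pderivW i K u) (pderivW i K v) Ω := by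
  intro x hx
  rw [pderivW_eq_fderiv hΩ hΩK i u hx, pderivW_eq_fderiv hΩ hΩK i v hx]
  rw [Filter.EventuallyEq.fderiv_eq (Filter.eventually_of_mem (hΩ.mem_nhds hx) huv)]

lemma pderivW_contDiffOn {u : Euc d → ℝ} {n : ℕ} (hu : ContDiffOn ℝ (n+1 : ℕ) u Ω) (i : Fin d) :
    ContDiffOn ℝ (n : ℕ) (pderivW i K u) Ω := by
  have h1 : ContDiffOn ℝ (n : ℕ) (fun x => fderiv ℝ u x (EuclideanSpace.single i 1)) Ω := by
    have := hu.fderiv_of_isOpen hΩ (m := (n : ℕ)) (by exact_mod_cast le_rfl)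
    exact this.clm_apply contDiffOn_const
  exact h1.congr (fun x hx => pderivW_eq_fderiv hΩ hΩK i u hx)

lemma pderivW_comm {u : Euc d → ℝ} (hu : ContDiffOn ℝ 2 u Ω) (i j : Fin d) :
    EqOn (pderivW i K (pderivW j K u)) (pderivW j K (pderivW i K u)) Ω := by
  intro x hx
  have hu2 : ContDiffAt ℝ 2 u x := (hu x hx).contDiffAt (hΩ.mem_nhds hx)
  have hd' : ContDiffAt ℝ 1 (fderiv ℝ u) x := hu2.fderiv_right (by norm_num)
  have hx'' : HasFDerivAt (fderiv ℝ u) (fderiv ℝ (fderiv ℝ u) x) x :=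
    (hd'.differentiableAt (by norm_num)).hasFDerivAt
  have hev : ∀ᶠ y in 𝓝 x, HasFDerivAt u (fderiv ℝ u y) y := by
    filter_upwards [hΩ.mem_nhds hx] with y hy
    exact (((hu y hy).contDiffAt (hΩ.mem_nhds hy)).differentiableAt
      (by norm_num)).hasFDerivAt
  have sym := second_derivative_symmetric_of_eventually hev hx''
  have key : ∀ k l : Fin d,
      pderivW k K (pderivW l K u) x =
        (fderiv ℝ (fderiv ℝ u) x (EuclideanSpace.single k 1)) (EuclideanSpace.single l 1) := by
    intro k l
    rw [pderivW_eq_fderiv hΩ hΩK k _ hx]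
    have hEq : (pderivW l K u : Euc d → ℝ) =ᶠ[𝓝 x]
        (fun z => fderiv ℝ u z (EuclideanSpace.single l 1)) := by
      filter_upwards [hΩ.mem_nhds hx] with y hy
      exact pderivW_eq_fderiv hΩ hΩK l u hy
    rw [hEq.fderiv_eq]
    have hdiff : DifferentiableAt ℝ (fderiv ℝ u) x := hd'.differentiableAt (by norm_num)
    rw [fderiv_clm_apply hdiff (differentiableAt_const _)]
    simp
  rw [key i j, key j i, sym]

end PCalc

section PCalc2
variable {d : ℕ} {Ω K : Set (Euc d)} (hΩ : IsOpen Ω) (hΩK : Ω ⊆ K)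
include hΩ hΩK

lemma pderivW_iter_congr {u v : Euc d → ℝ} (huv : EqOn u v Ω) (j : Fin d) (n : ℕ) :
    EqOn ((pderivW j K)^[n] u) ((pderivW j K)^[n] v) Ω := by
  induction n with
  | zero => exact huv
  | succ n ih =>
    rw [Function.iterate_succ_apply', Function.iterate_succ_apply']
    exact pderivW_congr hΩ hΩK ih j

lemma pderivW_iter_contDiffOn {u : Euc d → ℝ} {k : ℕ} (j : Fin d) :
    ∀ (n : ℕ), ContDiffOn ℝ ((k + n : ℕ)) u Ω → ContDiffOn ℝ (k : ℕ) ((pderivW j K)^[n] u) Ω := by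
  intro n
  induction n generalizing u with
  | zero => intro hu; simpa using hu
  | succ n ih =>
    intro hu
    rw [Function.iterate_succ_apply]
    apply ih
    apply pderivW_contDiffOn hΩ hΩK (n := k + n)
    have : ((k + n : ℕ) + 1 : ℕ) = (k + (n+1) : ℕ) := by omega
    rw [this]; exact hu

lemma pderivW_iter_comm {u : Euc d → ℝ} (i j : Fin d) :
    ∀ (n : ℕ), ContDiffOn ℝ ((n + 1 : ℕ)) u Ω →
    EqOn (pderivW i K ((pderivW j K)^[n] u)) ((pderivW j K)^[n] (pderivW i K u)) Ω := by
  intro n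
  induction n generalizing u with
  | zero => intro _; exact Set.eqOn_refl _ _
  | succ n ih =>
    intro hu
    rw [Function.iterate_succ_apply]
    have h1 : EqOn (pderivW i K ((pderivW j K)^[n] (pderivW j K u)))
        ((pderivW j K)^[n] (pderivW i K (pderivW j K u))) Ω := by
      apply ih
      apply pderivW_contDiffOn hΩ hΩK (n := n+1)
      have : ((n + 1 : ℕ) + 1 : ℕ) = ((n+1) + 1 : ℕ) := by omega
      exact_mod_cast hu
    have h2 : EqOn ((pderivW j K)^[n] (pderivW i K (pderivW j K u)))
        ((pderivW j K)^[n] (pderivW j K (pderivW i K u))) Ω := by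
      apply pderivW_iter_congr hΩ hΩK
      apply pderivW_comm hΩ hΩK
      exact hu.of_le (by exact_mod_cast (by omega : 2 ≤ n + 1 + 1))
    refine h1.trans (h2.trans ?_)
    rw [Function.iterate_succ_apply]
    exact Set.eqOn_refl _ _

end PCalc2

def pfold {d : ℕ} (α : MIdx d) (K : Set (Euc d)) (l : List (Fin d)) (u : Euc d → ℝ) : Euc d → ℝ :=
  l.foldr (fun i g => (pderivW i K)^[α i] g) u

lemma pfold_nil {d : ℕ} (α : MIdx d) (K : Set (Euc d)) (u : Euc d → ℝ) :
    pfold α K [] u = u := rfl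

lemma pfold_cons {d : ℕ} (α : MIdx d) (K : Set (Euc d)) (j : Fin d) (l : List (Fin d))
    (u : Euc d → ℝ) : pfold α K (j :: l) u = (pderivW j K)^[α j] (pfold α K l u) := rfl

lemma pfold_append {d : ℕ} (α : MIdx d) (K : Set (Euc d)) (l₁ l₂ : List (Fin d))
    (u : Euc d → ℝ) : pfold α K (l₁ ++ l₂) u = pfold α K l₁ (pfold α K l₂ u) := by
  unfold pfold; rw [List.foldr_append]

lemma mderivW_eq_pfold {d : ℕ} (α : MIdx d) (K : Set (Euc d)) (u : Euc d → ℝ) :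
    mderivW α K u = pfold α K (List.finRange d) u := rfl

lemma pfold_eq_of_not_mem {d : ℕ} {α β : MIdx d} (K : Set (Euc d)) {i : Fin d}
    {l : List (Fin d)} (hl : i ∉ l) (hβ : ∀ j, j ≠ i → β j = α j) (u : Euc d → ℝ) :
    pfold β K l u = pfold α K l u := by
  induction l with
  | nil => rfl
  | cons j l ih =>
    have hji : j ≠ i := fun h => hl (h ▸ List.mem_cons_self (a := j) (l := l))
    rw [pfold_cons, pfold_cons, ih (fun h => hl (List.mem_cons_of_mem j h)), hβ j hji]

section PCalc3
variable {d : ℕ} {Ω K : Set (Euc d)} (hΩ : IsOpen Ω) (hΩK : Ω ⊆ K)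
include hΩ hΩK

lemma pfold_congr {u v : Euc d → ℝ} (huv : EqOn u v Ω) (α : MIdx d) (l : List (Fin d)) :
    EqOn (pfold α K l u) (pfold α K l v) Ω := by
  induction l with
  | nil => exact huv
  | cons j l ih => exact pderivW_iter_congr hΩ hΩK ih j (α j)

lemma pfold_contDiffOn (α : MIdx d) (l : List (Fin d)) {k : ℕ} {u : Euc d → ℝ}
    (hu : ContDiffOn ℝ ((k + (l.map α).sum : ℕ)) u Ω) :
    ContDiffOn ℝ (k : ℕ) (pfold α K l u) Ω := by
  induction l generalizing k with
  | nil => simpa [pfold_nil] using hu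
  | cons j l ih =>
    rw [pfold_cons]
    apply pderivW_iter_contDiffOn hΩ hΩK j (α j)
    apply ih
    have : ((k + α j) + (l.map α).sum : ℕ) = (k + ((j :: l).map α).sum : ℕ) := by
      simp [List.sum_cons]; omega
    rw [this]; exact hu

lemma pfold_comm (α : MIdx d) (i : Fin d) (l : List (Fin d)) {u : Euc d → ℝ}
    (hu : ContDiffOn ℝ (((l.map α).sum + 1 : ℕ)) u Ω) :
    EqOn (pderivW i K (pfold α K l u)) (pfold α K l (pderivW i K u)) Ω := by
  induction l generalizing u with
  | nil => exact Set.eqOn_refl _ _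
  | cons j l ih =>
    rw [pfold_cons, pfold_cons]
    have h1 : EqOn (pderivW i K ((pderivW j K)^[α j] (pfold α K l u)))
        ((pderivW j K)^[α j] (pderivW i K (pfold α K l u))) Ω := by
      apply pderivW_iter_comm hΩ hΩK i j (α j)
      apply pfold_contDiffOn hΩ hΩK α l (k := α j + 1)
      have : ((α j + 1) + (l.map α).sum : ℕ) = (((j :: l).map α).sum + 1 : ℕ) := by
        simp [List.sum_cons]; omega
      rw [this]; exact hu
    refine h1.trans ?_
    apply pderivW_iter_congr hΩ hΩK
    apply ih
    exact hu.of_le (by exact_mod_cast (by simp only [List.map_cons, List.sum_cons]; omega :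
      (l.map α).sum + 1 ≤ ((j :: l).map α).sum + 1))

/-- Key identity: on `Ω`, one extra partial derivative of `D^α u` is `D^β u`,
where `β` increments `α` at `i`. -/
lemma pderivW_mderivW (α : MIdx d) (i : Fin d) {u : Euc d → ℝ}
    (hu : ContDiffOn ℝ ((mOrder α + 1 : ℕ)) u Ω) :
    EqOn (pderivW i K (mderivW α K u))
      (mderivW (fun t => if t = i then α i + 1 else α t) K u) Ω := by
  set β : MIdx d := fun t => if t = i then α i + 1 else α t with hβdef
  obtain ⟨l₁, l₂, hsplit⟩ := List.append_of_mem (List.mem_finRange i)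
  have hnodup : (l₁ ++ i :: l₂).Nodup := hsplit ▸ List.nodup_finRange d
  rw [List.nodup_append] at hnodup
  have hil₂ : i ∉ l₂ := by
    have := hnodup.2.1
    rw [List.nodup_cons] at this
    exact this.1
  have hil₁ : i ∉ l₁ := fun h => hnodup.2.2 i h i List.mem_cons_self rfl
  have hβa : ∀ j, j ≠ i → β j = α j := by intro j hj; simp [hβdef, hj]
  have hcost : mOrder α = (l₁.map α).sum + (α i + (l₂.map α).sum) := by
    have : mOrder α = (((List.finRange d).map α)).sum := by
      rw [mOrder, Fin.sum_univ_def]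
    rw [this, hsplit]; simp [List.sum_append, List.sum_cons]
  have expand : mderivW α K u
      = pfold α K l₁ ((pderivW i K)^[α i] (pfold α K l₂ u)) := by
    rw [mderivW_eq_pfold, hsplit, pfold_append, pfold_cons]
  have expandβ : mderivW β K u
      = pfold α K l₁ ((pderivW i K)^[α i + 1] (pfold α K l₂ u)) := by
    rw [mderivW_eq_pfold, hsplit, pfold_append, pfold_cons]
    rw [pfold_eq_of_not_mem K hil₁ hβa, pfold_eq_of_not_mem K hil₂ hβa]
    have : β i = α i + 1 := by simp [hβdef]
    rw [this]
  rw [expand, expandβ]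
  have hreg : ContDiffOn ℝ (((l₁.map α).sum + 1 : ℕ))
      ((pderivW i K)^[α i] (pfold α K l₂ u)) Ω := by
    apply pderivW_iter_contDiffOn hΩ hΩK i (α i) (k := (l₁.map α).sum + 1)
    apply pfold_contDiffOn hΩ hΩK α l₂ (k := (l₁.map α).sum + 1 + α i)
    have : (((l₁.map α).sum + 1 + α i) + (l₂.map α).sum : ℕ) = (mOrder α + 1 : ℕ) := by
      omega
    rw [this]; exact hu
  refine (pfold_comm hΩ hΩK α i l₁ hreg).trans ?_
  rw [← Function.iterate_succ_apply' (pderivW i K) (α i) (pfold α K l₂ u)]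
  exact Set.eqOn_refl _ _

end PCalc3

lemma euc_coord_le_norm {d : ℕ} (v : Euc d) (j : Fin d) : |v j| ≤ ‖v‖ := by
  have h1 : (inner ℝ (EuclideanSpace.single j (1:ℝ)) v : ℝ) = v j := by
    rw [EuclideanSpace.inner_single_left]; simp
  have := abs_real_inner_le_norm (EuclideanSpace.single j (1:ℝ)) v
  rw [h1, EuclideanSpace.norm_single] at this
  simpa using this

lemma euc_decomp {d : ℕ} (v : Euc d) :
    v = ∑ i, v i • EuclideanSpace.single i (1:ℝ) := by
  ext j
  simp [Pi.single_apply]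

section Bound
variable {d : ℕ} {Ω K : Set (Euc d)} (hΩ : IsOpen Ω) (hΩK : Ω ⊆ K)
include hΩ hΩK

lemma mderivW_differentiableAt (α : MIdx d) {f : Euc d → ℝ}
    (hf : ContDiffOn ℝ ((mOrder α + 1 : ℕ)) f Ω) {x : Euc d} (hx : x ∈ Ω) :
    DifferentiableAt ℝ (mderivW α K f) x := by
  have h1 : ContDiffOn ℝ (1 : ℕ) (mderivW α K f) Ω := by
    rw [mderivW_eq_pfold]
    apply pfold_contDiffOn hΩ hΩK α _ (k := 1)
    have : ((1 + ((List.finRange d).map α).sum : ℕ)) = (mOrder α + 1 : ℕ) := by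
      rw [mOrder, Fin.sum_univ_def]; omega
    rw [this]; exact hf
  have := (h1 x hx).contDiffAt (hΩ.mem_nhds hx)
  exact this.differentiableAt (by norm_num)

lemma mderivW_fderiv_bound (α : MIdx d) {f : Euc d → ℝ}
    (hf : ContDiffOn ℝ ((mOrder α + 1 : ℕ)) f Ω) {Mb : ℝ} (hMb : 0 ≤ Mb)
    (hb : ∀ i : Fin d, ∀ x ∈ Ω,
      |mderivW (fun t => if t = i then α i + 1 else α t) K f x| ≤ Mb)
    {x : Euc d} (hx : x ∈ Ω) :
    ‖fderiv ℝ (mderivW α K f) x‖ ≤ d * Mb := by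
  have hcomp : ∀ i : Fin d,
      |fderiv ℝ (mderivW α K f) x (EuclideanSpace.single i 1)| ≤ Mb := by
    intro i
    have h1 : fderiv ℝ (mderivW α K f) x (EuclideanSpace.single i 1)
        = pderivW i K (mderivW α K f) x := (pderivW_eq_fderiv hΩ hΩK i _ hx).symm
    rw [h1, pderivW_mderivW hΩ hΩK α i hf hx]
    exact hb i x hx
  apply ContinuousLinearMap.opNorm_le_bound _ (by positivity)
  intro v
  set L := fderiv ℝ (mderivW α K f) x
  calc ‖L v‖ = ‖L (∑ i, v i • EuclideanSpace.single i (1:ℝ))‖ := by rw [← euc_decomp]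
    _ = ‖∑ i, v i • L (EuclideanSpace.single i (1:ℝ))‖ := by
        rw [map_sum]; simp_rw [_root_.map_smul]
    _ ≤ ∑ i, ‖v i • L (EuclideanSpace.single i (1:ℝ))‖ := norm_sum_le _ _
    _ ≤ ∑ _i : Fin d, Mb * ‖v‖ := by
        apply Finset.sum_le_sum
        intro i _
        rw [norm_smul]
        have := hcomp i
        calc ‖v i‖ * ‖L (EuclideanSpace.single i (1:ℝ))‖ ≤ ‖v‖ * Mb := by
              apply mul_le_mul (euc_coord_le_norm v i) ?_ (norm_nonneg _) (norm_nonneg _)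
              simpa using this
          _ = Mb * ‖v‖ := mul_comm _ _
    _ = d * Mb * ‖v‖ := by rw [Finset.sum_const, Finset.card_univ]; simp; ring

end Bound

open Metric Set.Notation in
lemma seg_meets_frontier {d : ℕ} {Ω : Set (Euc d)} (hΩ : IsOpen Ω) {x x' : Euc d}
    (hx : x ∈ Ω) (hns : ¬ (segment ℝ x x' ⊆ Ω)) :
    ∃ p ∈ frontier Ω, p ∈ segment ℝ x x' := by
  by_contra hcon
  push_neg at hcon
  have hdis : Disjoint (frontier Ω) (segment ℝ x x') :=
    Set.disjoint_left.mpr (fun p hp hps => hcon p hp hps)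
  have hclopen := isClopen_preimage_val hΩ hdis
  have hpre : PreconnectedSpace (segment ℝ x x') :=
    Subtype.preconnectedSpace (convex_segment x x').isPreconnected
  have hne : ((segment ℝ x x') ↓∩ Ω).Nonempty :=
    ⟨⟨x, left_mem_segment ℝ x x'⟩, hx⟩
  have huniv := hclopen.eq_univ hne
  apply hns
  intro p hp
  have hmem : (⟨p, hp⟩ : segment ℝ x x') ∈ ((segment ℝ x x') ↓∩ Ω) := by
    rw [huniv]; trivial
  exact hmem

open Metric in
lemma chart_segment {d : ℕ} {U : Set (Euc d)} {Φ Ψ : Euc d → Euc d} {M : ℝ} (hM : 0 < M)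
    (hU : IsOpen U)
    (hΦΨ : ∀ y ∈ ball (0 : Euc d) 1, Φ (Ψ y) = y)
    (hUeq : U = Ψ '' ball (0 : Euc d) 1)
    (hΨc : ContinuousOn Ψ (ball (0 : Euc d) 1))
    (hΦdiff : ∀ z ∈ U, DifferentiableAt ℝ Φ z)
    (hΦlip : ∀ z ∈ U, ‖fderiv ℝ Φ z‖ ≤ M)
    (x x' : Euc d) (hx : x ∈ U) (hΦx : ‖Φ x‖ < 1/2)
    (hclose : M * ‖x' - x‖ ≤ 1/8) :
    x' ∈ U ∧ ‖Φ x' - Φ x‖ ≤ M * ‖x' - x‖ := by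
  set γ : ℝ → Euc d := fun t => x + t • (x' - x) with hγdef
  have hγcont : Continuous γ := by fun_prop
  have hγ0 : γ 0 = x := by simp [hγdef]
  have hγ1 : γ 1 = x' := by simp [hγdef]
  have hγsub : ∀ s t : ℝ, γ t - γ s = (t - s) • (x' - x) := by
    intro s t
    simp only [hγdef, sub_smul]
    abel
  set A : Set ℝ := {t | t ∈ Icc (0:ℝ) 1 ∧ γ t ∈ U ∧ ‖Φ (γ t) - Φ x‖ ≤ M * t * ‖x' - x‖}
    with hAdef
  have h0A : (0:ℝ) ∈ A := by
    refine ⟨⟨le_refl 0, zero_le_one⟩, ?_, ?_⟩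
    · rw [hγ0]; exact hx
    · rw [hγ0]; simp
  have hAne : A.Nonempty := ⟨0, h0A⟩
  have hAsub : A ⊆ Icc (0:ℝ) 1 := fun t ht => ht.1
  have hAbdd : BddAbove A := BddAbove.mono hAsub bddAbove_Icc
  set T := sSup A with hTdef
  have hT0 : 0 ≤ T := le_csSup hAbdd h0A
  have hT1 : T ≤ 1 := csSup_le hAne (fun t ht => ht.1.2)
  -- T ∈ A
  have hTA : T ∈ A := by
    obtain ⟨u, humono, hutend, huA⟩ := exists_seq_tendsto_sSup hAne hAbdd
    have hγu : Filter.Tendsto (fun n => γ (u n)) Filter.atTop (𝓝 (γ T)) :=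
      (hγcont.tendsto T).comp hutend
    have hball : ∀ n, Φ (γ (u n)) ∈ closedBall (0 : Euc d) (7/8) := by
      intro n
      rw [mem_closedBall, dist_zero_right]
      have h1 := (huA n).2.2
      have h2 : M * u n * ‖x' - x‖ ≤ 1/8 := by
        have hun1 : u n ≤ 1 := (huA n).1.2
        have hun0 : 0 ≤ u n := (huA n).1.1
        calc M * u n * ‖x' - x‖ ≤ M * 1 * ‖x' - x‖ := by
              apply mul_le_mul_of_nonneg_right _ (norm_nonneg _)
              exact mul_le_mul_of_nonneg_left hun1 hM.le
          _ = M * ‖x' - x‖ := by rw [mul_one]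
          _ ≤ 1/8 := hclose
      calc ‖Φ (γ (u n))‖ ≤ ‖Φ (γ (u n)) - Φ x‖ + ‖Φ x‖ := by
            have := norm_add_le (Φ (γ (u n)) - Φ x) (Φ x); simpa using this
        _ ≤ 1/8 + 1/2 := add_le_add (h1.trans h2) hΦx.le
        _ ≤ 7/8 := by norm_num
    obtain ⟨w, hw, φ, hφmono, hφtend⟩ :=
      (isCompact_closedBall (0 : Euc d) (7/8)).tendsto_subseq hball
    have hwball : w ∈ ball (0 : Euc d) 1 := by
      rw [mem_closedBall, dist_zero_right] at hw
      rw [mem_ball, dist_zero_right]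
      linarith
    have hΨw : Filter.Tendsto (fun n => Ψ (Φ (γ (u (φ n))))) Filter.atTop (𝓝 (Ψ w)) := by
      apply ((hΨc w hwball).tendsto).comp
      rw [tendsto_nhdsWithin_iff]
      refine ⟨hφtend, Filter.Eventually.of_forall (fun n => ?_)⟩
      have := hball (φ n)
      rw [mem_closedBall, dist_zero_right] at this
      rw [mem_ball, dist_zero_right]
      linarith
    have heq : ∀ n, Ψ (Φ (γ (u (φ n)))) = γ (u (φ n)) := by
      intro n
      have hmem : γ (u (φ n)) ∈ U := (huA (φ n)).2.1
      rw [hUeq] at hmem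
      obtain ⟨y, hy, hyeq⟩ := hmem
      rw [← hyeq, hΦΨ y hy]
    have hγuφ : Filter.Tendsto (fun n => γ (u (φ n))) Filter.atTop (𝓝 (γ T)) :=
      hγu.comp hφmono.tendsto_atTop
    have hΨwγT : Ψ w = γ T := by
      apply tendsto_nhds_unique _ hγuφ
      rw [show (fun n => γ (u (φ n))) = fun n => Ψ (Φ (γ (u (φ n)))) from funext fun n => (heq n).symm]
      exact hΨw
    have hγTU : γ T ∈ U := by
      rw [← hΨwγT, hUeq]; exact mem_image_of_mem Ψ hwball
    have hΦγT : Φ (γ T) = w := by rw [← hΨwγT, hΦΨ w hwball]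
    refine ⟨⟨hT0, hT1⟩, hγTU, ?_⟩
    rw [hΦγT]
    have htend1 : Filter.Tendsto (fun n => M * u (φ n) * ‖x' - x‖) Filter.atTop
        (𝓝 (M * T * ‖x' - x‖)) := by
      apply Filter.Tendsto.mul_const
      exact (hutend.comp hφmono.tendsto_atTop).const_mul M
    have htend2 : Filter.Tendsto (fun n => ‖Φ (γ (u (φ n))) - Φ x‖) Filter.atTop
        (𝓝 (‖w - Φ x‖)) := (hφtend.sub_const (Φ x)).norm
    exact le_of_tendsto_of_tendsto' htend2 htend1 (fun n => (huA (φ n)).2.2)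
  -- T = 1
  have hT_eq : T = 1 := by
    by_contra hne1
    have hTlt : T < 1 := lt_of_le_of_ne hT1 hne1
    obtain ⟨r, hr, hrball⟩ := (Metric.isOpen_iff).mp hU (γ T) hTA.2.1
    set t := min 1 (T + r / (‖x' - x‖ + 1)) with htdef
    have hnorm_pos : (0:ℝ) < ‖x' - x‖ + 1 := by positivity
    have htT : T < t := by
      apply lt_min hTlt
      have : 0 < r / (‖x' - x‖ + 1) := by positivity
      linarith
    have ht1 : t ≤ 1 := min_le_left _ _
    have htTr : (t - T) * ‖x' - x‖ < r := by
      have h1 : t - T ≤ r / (‖x' - x‖ + 1) := by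
        have := min_le_right 1 (T + r / (‖x' - x‖ + 1))
        linarith [this]
      calc (t - T) * ‖x' - x‖ ≤ r / (‖x' - x‖ + 1) * ‖x' - x‖ :=
            mul_le_mul_of_nonneg_right h1 (norm_nonneg _)
        _ < r / (‖x' - x‖ + 1) * (‖x' - x‖ + 1) := by
            apply mul_lt_mul_of_pos_left (by linarith) (by positivity)
        _ = r := div_mul_cancel₀ r (by positivity)
    have hγtball : γ t ∈ ball (γ T) r := by
      rw [mem_ball, dist_eq_norm, hγsub T t]
      rw [norm_smul, Real.norm_eq_abs, abs_of_pos (by linarith)]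
      exact htTr
    have hMVT : ‖Φ (γ t) - Φ (γ T)‖ ≤ M * ‖γ t - γ T‖ := by
      apply Convex.norm_image_sub_le_of_norm_hasFDerivWithin_le
        (f' := fun z => fderiv ℝ Φ z)
        (fun z hz => ((hΦdiff z (hrball hz)).hasFDerivAt).hasFDerivWithinAt)
        (fun z hz => hΦlip z (hrball hz)) (convex_ball _ _) (mem_ball_self hr) hγtball
    have hbound : ‖Φ (γ t) - Φ x‖ ≤ M * t * ‖x' - x‖ := by
      have h1 : ‖γ t - γ T‖ = (t - T) * ‖x' - x‖ := by
        rw [hγsub T t, norm_smul, Real.norm_eq_abs, abs_of_pos (by linarith)]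
      calc ‖Φ (γ t) - Φ x‖ ≤ ‖Φ (γ t) - Φ (γ T)‖ + ‖Φ (γ T) - Φ x‖ :=
            norm_sub_le_norm_sub_add_norm_sub _ _ _
        _ ≤ M * ((t - T) * ‖x' - x‖) + M * T * ‖x' - x‖ := by
            apply add_le_add _ hTA.2.2
            rw [← h1]; exact hMVT
        _ = M * t * ‖x' - x‖ := by ring
    have htA : t ∈ A := ⟨⟨by linarith, ht1⟩, hrball hγtball, hbound⟩
    have : t ≤ T := le_csSup hAbdd htA
    linarith
  rw [hT_eq] at hTA
  obtain ⟨-, hU', hb'⟩ := hTA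
  rw [hγ1] at hU' hb'
  refine ⟨hU', ?_⟩
  calc ‖Φ x' - Φ x‖ ≤ M * 1 * ‖x' - x‖ := hb'
    _ = M * ‖x' - x‖ := by ring

open Metric in
/-- fderiv bound from iterated–within bound at order 1, on an open set. -/
lemma fderiv_norm_le_of_iterated {d : ℕ} {U : Set (Euc d)} (hU : IsOpen U)
    {Φ : Euc d → Euc d} {M : ℝ} {z : Euc d} (hz : z ∈ U)
    (h : ‖iteratedFDerivWithin ℝ 1 Φ U z‖ ≤ M) : ‖fderiv ℝ Φ z‖ ≤ M := by
  have hM0 : 0 ≤ M := le_trans (norm_nonneg _) h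
  rw [iteratedFDerivWithin_of_isOpen 1 hU hz] at h
  apply ContinuousLinearMap.opNorm_le_bound _ hM0
  intro v
  have h1 : fderiv ℝ Φ z v = iteratedFDeriv ℝ 1 Φ z (fun _ => v) := by
    rw [iteratedFDeriv_one_apply]
  rw [h1]
  calc ‖iteratedFDeriv ℝ 1 Φ z (fun _ => v)‖
      ≤ ‖iteratedFDeriv ℝ 1 Φ z‖ * ∏ _i : Fin 1, ‖v‖ :=
        (iteratedFDeriv ℝ 1 Φ z).le_opNorm _
    _ = ‖iteratedFDeriv ℝ 1 Φ z‖ * ‖v‖ := by simp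
    _ ≤ M * ‖v‖ := mul_le_mul_of_nonneg_right h (norm_nonneg _)

open Metric in
lemma lower_order_lipschitz
    {d m : ℕ} {Ω : Set (Euc d)} (hΩopen : IsOpen Ω)
    {K : Set (Euc d)} (hK : K = closure Ω)
    {U : ℕ → Set (Euc d)} {Φc Ψc : ℕ → Euc d → Euc d} {M δ : ℝ} {i₀ : Fin d}
    (hM : 0 < M) (hδ : 0 < δ)
    (hUopen : ∀ j, IsOpen (U j))
    (hcover : {x ∈ Ω | ∃ y ∈ frontier Ω, dist x y < δ} ⊆
      ⋃ j, Ψc j '' Metric.ball (0 : Euc d) (1/2))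
    (hinv : ∀ j, (∀ x ∈ U j, Ψc j (Φc j x) = x) ∧
      (∀ y ∈ Metric.ball (0 : Euc d) 1, Φc j (Ψc j y) = y) ∧
      Φc j '' U j = Metric.ball (0 : Euc d) 1 ∧
      Φc j '' (U j ∩ Ω) = {y ∈ Metric.ball (0 : Euc d) 1 | 0 < y i₀})
    (hsm : ∀ j, ContDiffOn ℝ (m : ℕ∞) (Φc j) (U j) ∧
      ContDiffOn ℝ (m : ℕ∞) (Ψc j) (Metric.ball (0 : Euc d) 1))
    (hder : ∀ j, ∀ n ≤ m,
      (∀ x ∈ U j, ‖iteratedFDerivWithin ℝ n (Φc j) (U j) x‖ ≤ M) ∧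
      (∀ y ∈ Metric.ball (0 : Euc d) 1,
        ‖iteratedFDerivWithin ℝ n (Ψc j) (Metric.ball (0 : Euc d) 1) y‖ ≤ M))
    {f : Euc d → ℝ} (hfK : ContDiffOn ℝ (m : ℕ∞) f K)
    {α : MIdx d} (hαm : mOrder α + 1 ≤ m)
    {Mb : ℝ} (hMb : 0 < Mb)
    (hbd : ∀ β : MIdx d, mOrder β ≤ m → ∀ x ∈ K, |mderivW β K f x| ≤ Mb)
    {x x' : Euc d} (hx : x ∈ Ω) (hx' : x' ∈ Ω)
    (hclose : ‖x - x'‖ < min δ (1/(8*(M+1)))) :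
    |mderivW α K f x - mderivW α K f x'| ≤ (d * Mb * (M*M+1)) * ‖x - x'‖ := by
  have hΩK : Ω ⊆ K := hK ▸ subset_closure
  have hm1 : 1 ≤ m := le_trans (by omega) hαm
  set h := mderivW α K f with hh
  have hfΩ : ContDiffOn ℝ ((mOrder α + 1 : ℕ)) f Ω := by
    apply (hfK.mono hΩK).of_le
    exact_mod_cast hαm
  have hdiff : ∀ z ∈ Ω, DifferentiableAt ℝ h z := fun z hz =>
    mderivW_differentiableAt hΩopen hΩK α hfΩ hz
  have hgrad : ∀ z ∈ Ω, ‖fderiv ℝ h z‖ ≤ d * Mb := by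
    intro z hz
    apply mderivW_fderiv_bound hΩopen hΩK α hfΩ hMb.le _ hz
    intro i w hw
    apply hbd _ _ w (hΩK hw)
    have hfun : (fun t => if t = i then α i + 1 else α t)
        = fun t => α t + (if t = i then 1 else 0) := by
      funext t
      split_ifs with ht
      · rw [ht]
      · omega
    rw [mOrder, hfun]
    rw [Finset.sum_add_distrib, Finset.sum_ite_eq' Finset.univ i (fun _ => 1)]
    simp only [Finset.mem_univ, if_true]
    exact hαm
  have hdMb : (0:ℝ) ≤ d * Mb := by positivity
  by_cases hseg : segment ℝ x x' ⊆ Ω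
  · -- interior case
    have hest : ‖h x' - h x‖ ≤ (d * Mb) * ‖x' - x‖ := by
      apply Convex.norm_image_sub_le_of_norm_hasFDerivWithin_le
        (f' := fun z => fderiv ℝ h z)
        (fun z hz => ((hdiff z (hseg hz)).hasFDerivAt).hasFDerivWithinAt)
        (fun z hz => hgrad z (hseg hz)) (convex_segment x x')
        (left_mem_segment ℝ x x') (right_mem_segment ℝ x x')
    rw [← Real.norm_eq_abs, ← norm_neg]
    simp only [neg_sub]
    calc ‖h x' - h x‖ ≤ (d * Mb) * ‖x' - x‖ := hest
      _ = (d * Mb) * ‖x - x'‖ := by rw [norm_sub_rev]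
      _ ≤ (d * Mb * (M*M+1)) * ‖x - x'‖ := by
          apply mul_le_mul_of_nonneg_right _ (norm_nonneg _)
          nlinarith
  · -- boundary case: pass through a chart
    obtain ⟨p, hpf, hpseg⟩ := seg_meets_frontier hΩopen hx hseg
    have hxstrip : x ∈ {x ∈ Ω | ∃ y ∈ frontier Ω, dist x y < δ} := by
      refine ⟨hx, p, hpf, ?_⟩
      have h1 := dist_add_dist_of_mem_segment hpseg
      have h2 : dist x p ≤ dist x x' := by
        have := dist_nonneg (x := p) (y := x')
        linarith
      calc dist x p ≤ dist x x' := h2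
        _ = ‖x - x'‖ := by rw [dist_eq_norm]
        _ < δ := lt_of_lt_of_le hclose (min_le_left _ _)
    obtain ⟨j, y, hy, hyx⟩ := by
      have := hcover hxstrip
      simpa only [Set.mem_iUnion, Set.mem_image] using this
    obtain ⟨hΨΦ, hΦΨ, hΦU, hΦUΩ⟩ := hinv j
    have hball : ball (0 : Euc d) (1/2) ⊆ ball (0 : Euc d) 1 := ball_subset_ball (by norm_num)
    have hUeq : U j = Ψc j '' ball (0 : Euc d) 1 := by
      apply Set.Subset.antisymm
      · intro u hu
        have : Φc j u ∈ ball (0 : Euc d) 1 := hΦU ▸ Set.mem_image_of_mem _ hu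
        exact ⟨Φc j u, this, hΨΦ u hu⟩
      · rintro _ ⟨w, hw, rfl⟩
        obtain ⟨u, hu, huw⟩ := (Set.ext_iff.mp hΦU w).mpr hw
        rw [← huw, hΨΦ u hu]
        exact hu
    have hxU : x ∈ U j := by
      rw [hUeq]
      exact ⟨y, hball hy, hyx⟩
    have hΦx : Φc j x = y := by rw [← hyx, hΦΨ y (hball hy)]
    have hΦdiff : ∀ z ∈ U j, DifferentiableAt ℝ (Φc j) z := by
      intro z hz
      exact (((hsm j).1 z hz).contDiffAt ((hUopen j).mem_nhds hz)).differentiableAt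
        (by exact_mod_cast (show m ≠ 0 by omega))
    have hΦlip : ∀ z ∈ U j, ‖fderiv ℝ (Φc j) z‖ ≤ M := fun z hz =>
      fderiv_norm_le_of_iterated (hUopen j) hz (((hder j 1 hm1).1) z hz)
    have hΨc' : ContinuousOn (Ψc j) (ball (0 : Euc d) 1) :=
      (hsm j).2.continuousOn
    have hΦxnorm : ‖Φc j x‖ < 1/2 := by
      rw [hΦx]
      rwa [mem_ball, dist_zero_right] at hy
    have hclose8 : M * ‖x' - x‖ ≤ 1/8 := by
      have h1 : ‖x' - x‖ ≤ 1/(8*(M+1)) := by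
        rw [norm_sub_rev]
        exact le_of_lt (lt_of_lt_of_le hclose (min_le_right _ _))
      calc M * ‖x' - x‖ ≤ M * (1/(8*(M+1))) := mul_le_mul_of_nonneg_left h1 hM.le
        _ ≤ 1/8 := by
            rw [mul_one_div, div_le_div_iff₀ (by positivity) (by norm_num : (0:ℝ) < 8)]
            nlinarith
    obtain ⟨hx'U, hΦbound⟩ := chart_segment hM (hUopen j) hΦΨ hUeq hΨc' hΦdiff hΦlip
      x x' hxU hΦxnorm hclose8
    -- positivity of the chart images
    set S : Set (Euc d) := {w ∈ ball (0 : Euc d) 1 | 0 < w i₀} with hSdef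
    have hyS : Φc j x ∈ S := hΦUΩ ▸ Set.mem_image_of_mem _ ⟨hxU, hx⟩
    have hy'S : Φc j x' ∈ S := hΦUΩ ▸ Set.mem_image_of_mem _ ⟨hx'U, hx'⟩
    have hSconv : Convex ℝ S := by
      apply Convex.inter (convex_ball _ _)
      exact convex_halfSpace_gt (f := fun w : Euc d => w i₀) ⟨fun a b => rfl, fun c a => by simp⟩ 0
    have hΨS : ∀ w ∈ S, Ψc j w ∈ U j ∩ Ω := by
      intro w hw
      obtain ⟨u, hu, huw⟩ := (Set.ext_iff.mp hΦUΩ w).mpr hw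
      rw [← huw, hΨΦ u hu.1]
      exact hu
    have hΨdiff : ∀ w ∈ ball (0 : Euc d) 1, DifferentiableAt ℝ (Ψc j) w := by
      intro w hw
      exact (((hsm j).2 w hw).contDiffAt ((isOpen_ball).mem_nhds hw)).differentiableAt
        (by exact_mod_cast (show m ≠ 0 by omega))
    have hΨlip : ∀ w ∈ ball (0 : Euc d) 1, ‖fderiv ℝ (Ψc j) w‖ ≤ M := fun w hw =>
      fderiv_norm_le_of_iterated isOpen_ball hw (((hder j 1 hm1).2) w hw)
    have hScontained : S ⊆ ball (0 : Euc d) 1 := fun w hw => hw.1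
    have hMVT : ‖(h ∘ Ψc j) (Φc j x') - (h ∘ Ψc j) (Φc j x)‖
        ≤ (d * Mb * M) * ‖Φc j x' - Φc j x‖ := by
      apply Convex.norm_image_sub_le_of_norm_hasFDerivWithin_le
        (f' := fun w => (fderiv ℝ h (Ψc j w)).comp (fderiv ℝ (Ψc j) w))
        (fun w hw => (((hdiff _ (hΨS w hw).2).hasFDerivAt).comp w
          ((hΨdiff w (hScontained hw)).hasFDerivAt)).hasFDerivWithinAt)
        (fun w hw => ?_) hSconv hyS hy'S
      calc ‖(fderiv ℝ h (Ψc j w)).comp (fderiv ℝ (Ψc j) w)‖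
          ≤ ‖fderiv ℝ h (Ψc j w)‖ * ‖fderiv ℝ (Ψc j) w‖ :=
            ContinuousLinearMap.opNorm_comp_le _ _
        _ ≤ (d * Mb) * M := by
            apply mul_le_mul (hgrad _ (hΨS w hw).2) (hΨlip w (hScontained hw))
              (norm_nonneg _) hdMb
        _ = d * Mb * M := rfl
    have hxΨ : Ψc j (Φc j x) = x := hΨΦ x hxU
    have hx'Ψ : Ψc j (Φc j x') = x' := hΨΦ x' hx'U
    rw [Function.comp_apply, Function.comp_apply, hxΨ, hx'Ψ] at hMVT
    rw [← Real.norm_eq_abs, ← norm_neg]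
    simp only [neg_sub]
    calc ‖h x' - h x‖ ≤ (d * Mb * M) * ‖Φc j x' - Φc j x‖ := hMVT
      _ ≤ (d * Mb * M) * (M * ‖x' - x‖) := by
          apply mul_le_mul_of_nonneg_left hΦbound (by positivity)
      _ = (d * Mb * (M*M)) * ‖x - x'‖ := by rw [norm_sub_rev]; ring
      _ ≤ (d * Mb * (M*M+1)) * ‖x - x'‖ := by
          apply mul_le_mul_of_nonneg_right _ (norm_nonneg _)
          nlinarith


/-- **Top-order equicontinuity suffices in `C^m`** (Corollary 1.10).
Let `K = closure Ω ⊆ ℝ^d` be compact, where `Ω` is a bounded open set satisfying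
the uniform `C^m`-regularity condition, and let `F ⊆ C^m(K)`.  If `F` is bounded
in the `C^m(K)` norm and the top-order derivatives (`|α| = m`) are uniformly
equicontinuous, then all derivatives of order up to `m` are uniformly
equicontinuous on `F`; consequently `F` is precompact in `C^m(K)`. -/
theorem top_order_equicontinuity_suffices_Cm
    (d m : ℕ) (Ω : Set (Euc d)) (hΩopen : IsOpen Ω) (hΩbdd : Bornology.IsBounded Ω)
    (hreg : UniformCmRegular m Ω)
    (K : Set (Euc d)) (hK : K = closure Ω)
    (F : Set (CmSpace d m K)) (hF : ∀ g ∈ F, IsCmTuple m K g)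
    (hbdd : ∃ M : ℝ, 0 < M ∧ ∀ g ∈ F, ∀ (α : Idx d m) (x : ↥K), |g α x| ≤ M)
    (hectop : ∀ ε : ℝ, 0 < ε → ∃ δ : ℝ, 0 < δ ∧ ∀ g ∈ F, ∀ α : Idx d m,
      mOrder α.1 = m → ∀ x₁ x₂ : ↥K, dist x₁ x₂ < δ → |g α x₁ - g α x₂| < ε) :
    (∀ ε : ℝ, 0 < ε → ∃ δ' : ℝ, 0 < δ' ∧ ∀ g ∈ F, ∀ (α : Idx d m) (x₁ x₂ : ↥K),
      dist x₁ x₂ < δ' → |g α x₁ - g α x₂| < ε) ∧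
    IsCompact (closure F) := by
  obtain ⟨Mb, hMb, hbdd'⟩ := hbdd
  obtain ⟨U, Φc, Ψc, M, δ, R, i₀, hM, hδ, hUopen, hcover, hlocfin, hinv, hsm, hder⟩ := hreg
  have hΩK : Ω ⊆ K := hK ▸ subset_closure
  have EC : ∀ ε : ℝ, 0 < ε → ∃ δ' : ℝ, 0 < δ' ∧ ∀ g ∈ F, ∀ (α : Idx d m) (x₁ x₂ : ↥K),
      dist x₁ x₂ < δ' → |g α x₁ - g α x₂| < ε := by
    intro ε hε
    obtain ⟨δt, hδt, htop⟩ := hectop ε hε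
    set C : ℝ := (d : ℝ) * Mb * (M*M+1) + 1 with hCdef
    have hC : 0 < C := by positivity
    have hC1 : 0 ≤ C - 1 := by
      have : (0:ℝ) ≤ (d : ℝ) * Mb * (M*M+1) := by positivity
      simp only [hCdef]; linarith
    set δ₀ : ℝ := min δ (1/(8*(M+1))) with hδ₀def
    have hδ₀ : 0 < δ₀ := lt_min hδ (by positivity)
    refine ⟨min δt (min (δ₀/2) (ε/(2*C))), by positivity, ?_⟩
    intro g hg α x₁ x₂ hdist
    by_cases htopα : mOrder α.1 = m
    · exact htop g hg α htopα x₁ x₂ (lt_of_lt_of_le hdist (min_le_left _ _))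
    · have hαm : mOrder α.1 + 1 ≤ m := by
        have := lt_of_le_of_ne α.2 htopα; omega
      obtain ⟨f, hf, hgf⟩ := hF g hg
      have hbd : ∀ β : MIdx d, mOrder β ≤ m → ∀ z ∈ K, |mderivW β K f z| ≤ Mb := by
        intro β hβ z hz
        have := hbdd' g hg ⟨β, hβ⟩ ⟨z, hz⟩
        rwa [hgf ⟨β, hβ⟩ ⟨z, hz⟩] at this
      have lip : ∀ z₁ z₂ : Euc d, z₁ ∈ Ω → z₂ ∈ Ω → ‖z₁ - z₂‖ < δ₀ →
          |mderivW α.1 K f z₁ - mderivW α.1 K f z₂| ≤ (C - 1) * ‖z₁ - z₂‖ := by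
        intro z₁ z₂ h1 h2 h3
        have := lower_order_lipschitz hΩopen hK hM hδ hUopen hcover hinv hsm hder
          hf hαm hMb hbd h1 h2 h3
        have hC' : C - 1 = (d : ℝ) * Mb * (M*M+1) := by simp [hCdef]
        rw [hC']
        exact this
      have hKest : |g α x₁ - g α x₂| ≤ (C - 1) * dist x₁ x₂ := by
        have hx₁ : (x₁ : Euc d) ∈ closure Ω := hK ▸ x₁.2
        have hx₂ : (x₂ : Euc d) ∈ closure Ω := hK ▸ x₂.2
        obtain ⟨u₁, hu₁Ω, hu₁⟩ := mem_closure_iff_seq_limit.mp hx₁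
        obtain ⟨u₂, hu₂Ω, hu₂⟩ := mem_closure_iff_seq_limit.mp hx₂
        set s₁ : ℕ → ↥K := fun n => ⟨u₁ n, hΩK (hu₁Ω n)⟩ with hs₁
        set s₂ : ℕ → ↥K := fun n => ⟨u₂ n, hΩK (hu₂Ω n)⟩ with hs₂
        have hts₁ : Filter.Tendsto s₁ Filter.atTop (nhds x₁) := tendsto_subtype_rng.mpr hu₁
        have hts₂ : Filter.Tendsto s₂ Filter.atTop (nhds x₂) := tendsto_subtype_rng.mpr hu₂
        have hφ₁ : Filter.Tendsto (fun n => g α (s₁ n)) Filter.atTop (nhds (g α x₁)) :=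
          ((g α).continuous.tendsto x₁).comp hts₁
        have hφ₂ : Filter.Tendsto (fun n => g α (s₂ n)) Filter.atTop (nhds (g α x₂)) :=
          ((g α).continuous.tendsto x₂).comp hts₂
        have hnorm : Filter.Tendsto (fun n => ‖u₁ n - u₂ n‖) Filter.atTop
            (nhds ‖(x₁ : Euc d) - (x₂ : Euc d)‖) := (hu₁.sub hu₂).norm
        have hdistval : dist x₁ x₂ = ‖(x₁ : Euc d) - (x₂ : Euc d)‖ := by
          rw [Subtype.dist_eq, dist_eq_norm]
        have hlt : ‖(x₁ : Euc d) - (x₂ : Euc d)‖ < δ₀ := by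
          rw [← hdistval]
          calc dist x₁ x₂ < min δt (min (δ₀/2) (ε/(2*C))) := hdist
            _ ≤ δ₀/2 := le_trans (min_le_right _ _) (min_le_left _ _)
            _ < δ₀ := by linarith
        have hev : ∀ᶠ n in Filter.atTop, ‖u₁ n - u₂ n‖ < δ₀ :=
          hnorm.eventually_lt_const hlt
        have hle : ∀ᶠ n in Filter.atTop,
            |g α (s₁ n) - g α (s₂ n)| ≤ (C - 1) * ‖u₁ n - u₂ n‖ := by
          filter_upwards [hev] with n hn
          have e₁ : g α (s₁ n) = mderivW α.1 K f (u₁ n) := hgf α (s₁ n)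
          have e₂ : g α (s₂ n) = mderivW α.1 K f (u₂ n) := hgf α (s₂ n)
          rw [e₁, e₂]
          exact lip (u₁ n) (u₂ n) (hu₁Ω n) (hu₂Ω n) hn
        have htend1 : Filter.Tendsto (fun n => |g α (s₁ n) - g α (s₂ n)|) Filter.atTop
            (nhds |g α x₁ - g α x₂|) := (hφ₁.sub hφ₂).abs
        have htend2 : Filter.Tendsto (fun n => (C - 1) * ‖u₁ n - u₂ n‖) Filter.atTop
            (nhds ((C - 1) * ‖(x₁ : Euc d) - (x₂ : Euc d)‖)) := hnorm.const_mul _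
        rw [hdistval]
        exact le_of_tendsto_of_tendsto htend1 htend2 hle
      have hd2 : dist x₁ x₂ ≤ ε/(2*C) :=
        le_of_lt (lt_of_lt_of_le hdist (le_trans (min_le_right _ _) (min_le_right _ _)))
      have hεC : (0:ℝ) ≤ ε/(2*C) := by positivity
      calc |g α x₁ - g α x₂| ≤ (C - 1) * dist x₁ x₂ := hKest
        _ ≤ (C - 1) * (ε/(2*C)) := mul_le_mul_of_nonneg_left hd2 hC1
        _ ≤ C * (ε/(2*C)) := mul_le_mul_of_nonneg_right (by linarith) hεC
        _ = ε/2 := by field_simp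
        _ < ε := by linarith
  refine ⟨EC, ?_⟩
  haveI hKcs : CompactSpace ↥K := by
    rw [hK]
    exact isCompact_iff_compactSpace.mp hΩbdd.isCompact_closure
  set e := ContinuousMap.isometryEquivBoundedOfCompact ↥K ℝ with hedef
  have hAcomp : ∀ α : Idx d m,
      IsCompact (closure ((fun g : CmSpace d m K => g α) '' F)) := by
    intro α
    set A := (fun g : CmSpace d m K => g α) '' F with hAdef
    set B := ⇑e '' A with hBdef
    have hin : ∀ (fb : BoundedContinuousFunction (↥K) ℝ) (x : ↥K),
        fb ∈ B → fb x ∈ Set.Icc (-Mb) Mb := by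
      rintro fb x ⟨u, ⟨g, hgF, rfl⟩, rfl⟩
      have h1 : e (g α) x = g α x := rfl
      rw [h1, Set.mem_Icc]
      have := hbdd' g hgF α x
      rw [abs_le] at this
      exact this
    have heqc : Equicontinuous (fun (fb : B) => ((fb : BoundedContinuousFunction (↥K) ℝ)
        : ↥K → ℝ)) := by
      apply UniformEquicontinuous.equicontinuous
      rw [Metric.uniformEquicontinuous_iff]
      intro ε hε
      obtain ⟨δ', hδ', hECε⟩ := EC ε hε
      refine ⟨δ', hδ', ?_⟩
      intro x y hxy fb
      obtain ⟨u, ⟨g, hgF, rfl⟩, hfb⟩ := fb.2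
      have h1 : (fb : BoundedContinuousFunction (↥K) ℝ) x = g α x := by rw [← hfb]; rfl
      have h2 : (fb : BoundedContinuousFunction (↥K) ℝ) y = g α y := by rw [← hfb]; rfl
      rw [h1, h2, Real.dist_eq]
      exact hECε g hgF α x y hxy
    have hBcomp := BoundedContinuousFunction.arzela_ascoli
      (Set.Icc (-Mb) Mb) isCompact_Icc B hin heqc
    have hBA : e.toHomeomorph.symm '' B = A := by
      rw [hBdef]
      ext u
      simp only [Set.mem_image, IsometryEquiv.coe_toHomeomorph_symm]
      constructor
      · rintro ⟨v, ⟨w, hw, rfl⟩, rfl⟩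
        rwa [e.symm_apply_apply]
      · intro hu
        exact ⟨e u, ⟨u, hu, rfl⟩, e.symm_apply_apply u⟩
    have hAeq : closure A = e.toHomeomorph.symm '' closure B := by
      rw [Homeomorph.image_closure, hBA]
    rw [hAeq]
    exact hBcomp.image e.toHomeomorph.symm.continuous
  have hsub : F ⊆ Set.univ.pi (fun α : Idx d m => (fun g : CmSpace d m K => g α) '' F) :=
    fun g hg α _ => ⟨g, hg, rfl⟩
  have hclsub : closure F ⊆
      Set.univ.pi (fun α : Idx d m => closure ((fun g : CmSpace d m K => g α) '' F)) := by
    rw [← closure_pi_set]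
    exact closure_mono hsub
  exact (isCompact_univ_pi hAcomp).of_isClosed_subset isClosed_closure hclsub


end
end

section
/- Attainment criterion for a one-dimensional variational problem (Proposition 1.12, main part). Let E = {u ∈ W^{1,1}(0,1) : u(0) = 0, u(1) = 1} (boundary values in the trace sense, i.e., for the absolutely continuous representative), and for constants k > 0, ℓ ≥ 0, p ≥ 1 and c ∈ L^1(0,1) define J(u) = ∫₀¹ [(k|u̇(t)|^p + ℓ|u(t)|^p)^{1/p} + c(t)] dt. Then the infimum of J over E is attained at some ū ∈ E if and only if ℓ = 0. -/
open MeasureTheory Set Filter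
open scoped ENNReal NNReal Topology

noncomputable section

/-- `u ∈ W^{1,1}(0,1)` with weak derivative `u'`, represented by its absolutely
continuous representative: `u'` is integrable on `(0,1)` and
`u(t) = u(0) + ∫₀ᵗ u'` for all `t ∈ [0,1]`. -/
def W11I (u u' : ℝ → ℝ) : Prop :=
  IntegrableOn u' (Set.Ioo 0 1) volume ∧
    ∀ t ∈ Set.Icc (0 : ℝ) 1, u t = u 0 + ∫ s in (0 : ℝ)..t, u' s

/-- Membership in `E = {u ∈ W^{1,1}(0,1) : u(0) = 0, u(1) = 1}` (boundary values
taken for the absolutely continuous representative). -/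
def MemE (u u' : ℝ → ℝ) : Prop :=
  W11I u u' ∧ u 0 = 0 ∧ u 1 = 1

/-- The functional `J(u) = ∫₀¹ [(k|u̇|^p + ℓ|u|^p)^{1/p} + c(t)] dt`, as an
extended real number (`+∞` if the nonnegative part of the integrand is not
integrable): it is the (possibly infinite) integral of the nonnegative term
plus the finite integral `∫₀¹ c`. -/
def Jace (k ℓ p : ℝ) (c : ℝ → ℝ) (u u' : ℝ → ℝ) : EReal :=
  ((∫⁻ t in Set.Ioo (0 : ℝ) 1,
      ENNReal.ofReal ((k * |u' t| ^ p + ℓ * |u t| ^ p) ^ (1 / p)) : ℝ≥0∞) : EReal) +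
    ((∫ t in Set.Ioo (0 : ℝ) 1, c t : ℝ) : EReal)

/-- Subadditivity of `x ↦ x ^ e` for `0 ≤ e ≤ 1` on nonnegative reals. -/
lemma my_rpow_subadd {x y e : ℝ} (hx : 0 ≤ x) (hy : 0 ≤ y) (he0 : 0 ≤ e) (he1 : e ≤ 1) :
    (x + y) ^ e ≤ x ^ e + y ^ e := by
  lift x to ℝ≥0 using hx
  lift y to ℝ≥0 using hy
  exact_mod_cast NNReal.rpow_add_le_add_rpow x y he0 he1

/-- `(k·|x|^p)^(1/p) = k^(1/p)·|x|`. -/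
lemma my_mul_abs_rpow {k p : ℝ} (hk : 0 ≤ k) (hp : 1 ≤ p) (x : ℝ) :
    (k * |x| ^ p) ^ (1 / p) = k ^ (1 / p) * |x| := by
  have hpne : p ≠ 0 := by positivity
  rw [Real.mul_rpow hk (Real.rpow_nonneg (abs_nonneg x) p),
    ← Real.rpow_mul (abs_nonneg x), mul_one_div, div_self hpne, Real.rpow_one]

/-- Lower bound: for any admissible `v`, `∫₀¹ K|v'| ≥ K` (since `∫₀¹ v' = 1`). -/
lemma my_lintegral_lower {v v' : ℝ → ℝ} (hv : MemE v v') {K : ℝ} (hK : 0 ≤ K) :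
    ENNReal.ofReal K ≤ ∫⁻ t in Set.Ioo (0 : ℝ) 1, ENNReal.ofReal (K * |v' t|) := by
  obtain ⟨⟨hint, hfml⟩, h0, h1⟩ := hv
  have hIoc : (volume.restrict (Set.Ioc (0:ℝ) 1)) = volume.restrict (Set.Ioo (0:ℝ) 1) :=
    (Measure.restrict_congr_set Ioo_ae_eq_Ioc).symm
  have hI : ∫ s in Set.Ioo (0:ℝ) 1, v' s = 1 := by
    have h := hfml 1 (by norm_num)
    rw [h1, h0, zero_add, intervalIntegral.integral_of_le zero_le_one] at h
    rw [← hIoc]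
    exact h.symm
  have hint' : IntegrableOn (fun t => K * |v' t|) (Set.Ioo (0:ℝ) 1) volume :=
    (hint.abs).const_mul K
  have h2 : ENNReal.ofReal (∫ t in Set.Ioo (0:ℝ) 1, K * |v' t|) =
      ∫⁻ t in Set.Ioo (0:ℝ) 1, ENNReal.ofReal (K * |v' t|) :=
    ofReal_integral_eq_lintegral_ofReal hint' (ae_of_all _ fun t => by positivity)
  rw [← h2]
  apply ENNReal.ofReal_le_ofReal
  have habs : (1:ℝ) ≤ ∫ t in Set.Ioo (0:ℝ) 1, |v' t| := by
    calc (1:ℝ) = |∫ t in Set.Ioo (0:ℝ) 1, v' t| := by rw [hI]; norm_num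
      _ ≤ ∫ t in Set.Ioo (0:ℝ) 1, |v' t| := by
          simpa [Real.norm_eq_abs] using
            norm_integral_le_integral_norm (μ := volume.restrict (Set.Ioo (0:ℝ) 1)) v'
  calc K = K * 1 := (mul_one K).symm
    _ ≤ K * ∫ t in Set.Ioo (0:ℝ) 1, |v' t| := mul_le_mul_of_nonneg_left habs hK
    _ = ∫ t in Set.Ioo (0:ℝ) 1, K * |v' t| := (integral_const_mul K _).symm

/-- Test functions concentrating near `t = 1`. -/
lemma my_test_fun {k ℓ p : ℝ} (hk : 0 < k) (hℓ : 0 ≤ ℓ) (hp : 1 ≤ p)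
    {a : ℝ} (ha0 : 0 ≤ a) (ha1 : a < 1) :
    ∃ w w' : ℝ → ℝ, MemE w w' ∧
      (∫⁻ t in Set.Ioo (0:ℝ) 1,
          ENNReal.ofReal ((k * |w' t| ^ p + ℓ * |w t| ^ p) ^ (1 / p))) ≤
        ENNReal.ofReal (k ^ (1/p)) + ENNReal.ofReal (ℓ ^ (1/p) * (1 - a)) := by
  have hp0 : (0:ℝ) < p := lt_of_lt_of_le one_pos hp
  have hpne : p ≠ 0 := ne_of_gt hp0
  have hq0 : (0:ℝ) ≤ 1/p := by positivity
  have hq1 : (1:ℝ)/p ≤ 1 := by rw [div_le_one hp0]; exact hp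
  have h1a : (0:ℝ) < 1 - a := by linarith
  set r : ℝ := (1 - a)⁻¹ with hr
  have hr0 : 0 < r := inv_pos.2 h1a
  set w' : ℝ → ℝ := Set.indicator (Set.Ioi a) (fun _ => r) with hw'
  set w : ℝ → ℝ := fun t => ∫ s in (0:ℝ)..t, w' s with hw
  have hIntOn : ∀ s : Set ℝ, volume s < ⊤ → IntegrableOn w' s volume := fun s hs =>
    (integrableOn_const hs.ne enorm_ne_top).indicator measurableSet_Ioi
  -- value of w
  have hval : ∀ t : ℝ, 0 ≤ t → w t = (volume (Set.Ioc a t)).toReal * r := by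
    intro t ht
    have hinter : Set.Ioi a ∩ Set.Ioc 0 t = Set.Ioc a t := by
      ext x
      simp only [Set.mem_inter_iff, Set.mem_Ioi, Set.mem_Ioc]
      constructor
      · rintro ⟨h1, h2, h3⟩; exact ⟨h1, h3⟩
      · rintro ⟨h1, h2⟩; exact ⟨h1, lt_of_le_of_lt ha0 h1, h2⟩
    have : w t = ∫ s in Set.Ioc (0:ℝ) t, w' s := by
      rw [hw]; exact intervalIntegral.integral_of_le ht
    rw [this, hw', integral_indicator measurableSet_Ioi,
      Measure.restrict_restrict measurableSet_Ioi, hinter, setIntegral_const, smul_eq_mul, measureReal_def]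
  have hw0 : w 0 = 0 := by rw [hw]; simp [intervalIntegral.integral_same]
  have hvol : ∀ t : ℝ, a < t → (volume (Set.Ioc a t)).toReal = t - a := by
    intro t ht
    rw [Real.volume_Ioc, ENNReal.toReal_ofReal (by linarith)]
  have hw1 : w 1 = 1 := by
    rw [hval 1 zero_le_one, hvol 1 ha1, hr]
    field_simp
  have hMemE : MemE w w' := by
    refine ⟨⟨hIntOn _ (by rw [Real.volume_Ioo]; exact ENNReal.ofReal_lt_top), ?_⟩, hw0, hw1⟩
    intro t ht
    rw [hw0, zero_add]
  -- bounds on w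
  have hwnn : ∀ t : ℝ, 0 ≤ t → 0 ≤ w t := by
    intro t ht
    rw [hval t ht]
    positivity
  have hwle1 : ∀ t : ℝ, 0 ≤ t → t ≤ 1 → w t ≤ 1 := by
    intro t ht ht1
    rw [hval t ht]
    rcases le_or_gt t a with h | h
    · rw [Set.Ioc_eq_empty (by exact fun hh => absurd hh (not_lt.2 h))]
      simp [hr0.le]
    · rw [hvol t h, hr, ← div_eq_mul_inv, div_le_one h1a]
      linarith
  have hwz : ∀ t : ℝ, t ≤ a → 0 ≤ t → w t = 0 := by
    intro t hta ht
    rw [hval t ht, Set.Ioc_eq_empty (by exact fun hh => absurd hh (not_lt.2 hta))]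
    simp
  -- pointwise bound for the integrand
  set G : ℝ → ℝ≥0∞ :=
    Set.indicator (Set.Ioi a) (fun _ => ENNReal.ofReal (k ^ (1/p) * r + ℓ ^ (1/p))) with hG
  have hpt : ∀ t ∈ Set.Ioo (0:ℝ) 1,
      ENNReal.ofReal ((k * |w' t| ^ p + ℓ * |w t| ^ p) ^ (1 / p)) ≤ G t := by
    intro t ht
    rcases le_or_gt t a with hta | hta
    · have hw't : w' t = 0 := by
        rw [hw']; exact Set.indicator_of_notMem (by simpa using hta) _
      have hwt : w t = 0 := hwz t hta ht.1.le
      rw [hw't, hwt]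
      simp only [abs_zero]
      rw [Real.zero_rpow hpne, mul_zero, mul_zero, add_zero, Real.zero_rpow (by positivity)]
      simp
    · have hw't : w' t = r := by
        rw [hw']; exact Set.indicator_of_mem (by simpa using hta) _
      have hGt : G t = ENNReal.ofReal (k ^ (1/p) * r + ℓ ^ (1/p)) := by
        rw [hG]; exact Set.indicator_of_mem (by simpa using hta) _
      rw [hGt]
      apply ENNReal.ofReal_le_ofReal
      calc (k * |w' t| ^ p + ℓ * |w t| ^ p) ^ (1 / p)
          ≤ (k * |w' t| ^ p) ^ (1/p) + (ℓ * |w t| ^ p) ^ (1/p) :=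
            my_rpow_subadd (by positivity) (by positivity) hq0 hq1
        _ = k ^ (1/p) * |w' t| + ℓ ^ (1/p) * |w t| := by
            rw [my_mul_abs_rpow hk.le hp, my_mul_abs_rpow hℓ hp]
        _ ≤ k ^ (1/p) * r + ℓ ^ (1/p) * 1 := by
            apply add_le_add
            · apply mul_le_mul_of_nonneg_left _ (Real.rpow_nonneg hk.le _)
              rw [hw't, abs_of_nonneg hr0.le]
            · apply mul_le_mul_of_nonneg_left _ (Real.rpow_nonneg hℓ _)
              rw [abs_of_nonneg (hwnn t ht.1.le)]
              exact hwle1 t ht.1.le ht.2.le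
        _ = k ^ (1/p) * r + ℓ ^ (1/p) := by ring
  refine ⟨w, w', hMemE, ?_⟩
  calc (∫⁻ t in Set.Ioo (0:ℝ) 1,
          ENNReal.ofReal ((k * |w' t| ^ p + ℓ * |w t| ^ p) ^ (1 / p)))
      ≤ ∫⁻ t in Set.Ioo (0:ℝ) 1, G t := setLIntegral_mono' measurableSet_Ioo hpt
    _ = ENNReal.ofReal (k ^ (1/p) * r + ℓ ^ (1/p)) * volume (Set.Ioi a ∩ Set.Ioo 0 1) := by
        rw [hG, lintegral_indicator measurableSet_Ioi]
        rw [Measure.restrict_restrict measurableSet_Ioi, setLIntegral_const]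
    _ = ENNReal.ofReal (k ^ (1/p) * r + ℓ ^ (1/p)) * ENNReal.ofReal (1 - a) := by
        congr 1
        have : Set.Ioi a ∩ Set.Ioo (0:ℝ) 1 = Set.Ioo a 1 := by
          ext x
          simp only [Set.mem_inter_iff, Set.mem_Ioi, Set.mem_Ioo]
          constructor
          · rintro ⟨h1, h2, h3⟩; exact ⟨h1, h3⟩
          · rintro ⟨h1, h2⟩; exact ⟨h1, lt_of_le_of_lt ha0 h1, h2⟩
        rw [this, Real.volume_Ioo]
    _ = ENNReal.ofReal ((k ^ (1/p) * r + ℓ ^ (1/p)) * (1 - a)) := by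
        rw [ENNReal.ofReal_mul (by positivity)]
    _ = ENNReal.ofReal (k ^ (1/p) + ℓ ^ (1/p) * (1 - a)) := by
        congr 1
        have hra : r * (1 - a) = 1 := by rw [hr]; field_simp
        linear_combination (k ^ (1/p)) * hra
    _ ≤ ENNReal.ofReal (k ^ (1/p)) + ENNReal.ofReal (ℓ ^ (1/p) * (1 - a)) :=
        ENNReal.ofReal_add_le

/-- **Attainment criterion for a one-dimensional variational problem**
(Proposition 1.12, main part).  For `k > 0`, `ℓ ≥ 0`, `p ≥ 1`, `c ∈ L¹(0,1)`, the
infimum over `E = {u ∈ W^{1,1}(0,1) : u(0)=0, u(1)=1}` of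
`J(u) = ∫₀¹ [(k|u̇|^p + ℓ|u|^p)^{1/p} + c(t)] dt` is attained iff `ℓ = 0`. -/
theorem attainment_iff_ell_zero
    (k ℓ p : ℝ) (hk : 0 < k) (hℓ : 0 ≤ ℓ) (hp : 1 ≤ p)
    (c : ℝ → ℝ) (hc : IntegrableOn c (Set.Ioo 0 1) volume) :
    (∃ ubar ubar' : ℝ → ℝ, MemE ubar ubar' ∧
        ∀ v v' : ℝ → ℝ, MemE v v' → Jace k ℓ p c ubar ubar' ≤ Jace k ℓ p c v v') ↔
      ℓ = 0 := by
  have hp0 : (0:ℝ) < p := lt_of_lt_of_le one_pos hp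
  have hpne : p ≠ 0 := ne_of_gt hp0
  have hq0 : (0:ℝ) ≤ 1/p := by positivity
  have hq1 : (1:ℝ)/p ≤ 1 := by rw [div_le_one hp0]; exact hp
  have hK0 : (0:ℝ) ≤ k ^ (1/p) := Real.rpow_nonneg hk.le _
  constructor
  · rintro ⟨u, u', hu, hmin⟩
    by_contra hℓ0
    have hℓpos : 0 < ℓ := lt_of_le_of_ne hℓ (Ne.symm hℓ0)
    obtain ⟨⟨hu'int, hufml⟩, hu0, hu1⟩ := hu
    set L : ℝ≥0∞ := ∫⁻ t in Set.Ioo (0:ℝ) 1,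
      ENNReal.ofReal ((k * |u' t| ^ p + ℓ * |u t| ^ p) ^ (1 / p)) with hL
    set C : ℝ := ∫ t in Set.Ioo (0:ℝ) 1, c t with hC
    -- Step 1: L ≤ ofReal (k ^ (1/p))
    have key : ∀ a : ℝ, 0 ≤ a → a < 1 →
        L ≤ ENNReal.ofReal (k ^ (1/p)) + ENNReal.ofReal (ℓ ^ (1/p) * (1 - a)) := by
      intro a ha0 ha1
      obtain ⟨w, w', hw, hwle⟩ := my_test_fun hk hℓ hp ha0 ha1
      have h := hmin w w' hw
      unfold Jace at h
      have h2 : (L : EReal) ≤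
          ((∫⁻ t in Set.Ioo (0:ℝ) 1,
            ENNReal.ofReal ((k * |w' t| ^ p + ℓ * |w t| ^ p) ^ (1 / p)) : ℝ≥0∞) : EReal) :=
        (EReal.addLECancellable_coe C).add_le_add_iff_right.1 h
      have h3 := EReal.coe_ennreal_le_coe_ennreal_iff.1 h2
      exact h3.trans hwle
    have hL1 : L ≤ ENNReal.ofReal (k ^ (1/p)) := by
      apply ENNReal.le_of_forall_pos_le_add
      intro ε hε _
      set δ : ℝ := (ε:ℝ) / (ℓ ^ (1/p) + 1) with hδ
      have hℓp0 : (0:ℝ) ≤ ℓ ^ (1/p) := Real.rpow_nonneg hℓ _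
      have hεpos : (0:ℝ) < (ε:ℝ) := hε
      have hδ0 : 0 < δ := by positivity
      set a : ℝ := max 0 (1 - δ) with ha
      have ha0 : 0 ≤ a := le_max_left _ _
      have ha1 : a < 1 := max_lt one_pos (by linarith)
      refine (key a ha0 ha1).trans ?_
      have h1a : 1 - a ≤ δ := by
        have : 1 - δ ≤ a := le_max_right _ _
        linarith
      have hb : ℓ ^ (1/p) * (1 - a) ≤ (ε:ℝ) := by
        calc ℓ ^ (1/p) * (1 - a) ≤ ℓ ^ (1/p) * δ := by
              apply mul_le_mul_of_nonneg_left h1a hℓp0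
          _ = ℓ ^ (1/p) * ((ε:ℝ) / (ℓ ^ (1/p) + 1)) := by rw [hδ]
          _ ≤ (ε:ℝ) := by
              rw [mul_div_assoc']
              rw [div_le_iff₀ (by positivity)]
              nlinarith
      gcongr
      calc ENNReal.ofReal (ℓ ^ (1/p) * (1 - a)) ≤ ENNReal.ofReal (ε:ℝ) :=
            ENNReal.ofReal_le_ofReal hb
        _ = (ε : ℝ≥0∞) := ENNReal.ofReal_coe_nnreal
    -- Step 2: lower bound chain
    set M : ℝ≥0∞ := ∫⁻ t in Set.Ioo (0:ℝ) 1,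
      ENNReal.ofReal (k ^ (1/p) * |u' t|) with hM
    have hlow : ∀ x y : ℝ, k ^ (1/p) * |x| ≤ (k * |x| ^ p + ℓ * |y| ^ p) ^ (1/p) := by
      intro x y
      rw [← my_mul_abs_rpow hk.le hp x]
      apply Real.rpow_le_rpow (by positivity) _ hq0
      have : 0 ≤ ℓ * |y| ^ p := by positivity
      linarith
    have hML : M ≤ L := lintegral_mono fun t => ENNReal.ofReal_le_ofReal (hlow _ _)
    have hKM : ENNReal.ofReal (k ^ (1/p)) ≤ M :=
      my_lintegral_lower ⟨⟨hu'int, hufml⟩, hu0, hu1⟩ hK0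
    have hMne : M ≠ ⊤ := (((hML.trans hL1)).trans_lt ENNReal.ofReal_lt_top).ne
    have hLM : L ≤ M := hL1.trans hKM
    -- measurability
    have hmeasu' : AEMeasurable u' (volume.restrict (Set.Ioo (0:ℝ) 1)) :=
      hu'int.aemeasurable
    have hIcc : IntegrableOn u' (Set.Icc (0:ℝ) 1) volume := by
      rw [IntegrableOn, ← Measure.restrict_congr_set Ioo_ae_eq_Icc]
      exact hu'int
    have hFcont : ContinuousOn (fun t => u 0 + ∫ s in (0:ℝ)..t, u' s) (Set.Icc 0 1) := by
      apply continuousOn_const.add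
      have := intervalIntegral.continuousOn_primitive_interval
        (a := 0) (b := 1) (μ := volume) (f := u') (by rwa [uIcc_of_le zero_le_one])
      rwa [uIcc_of_le zero_le_one] at this
    have humeas : AEMeasurable u (volume.restrict (Set.Ioo (0:ℝ) 1)) := by
      have h1 : AEMeasurable (fun t => u 0 + ∫ s in (0:ℝ)..t, u' s)
          (volume.restrict (Set.Ioo (0:ℝ) 1)) :=
        (hFcont.mono Ioo_subset_Icc_self).aemeasurable measurableSet_Ioo
      apply h1.congr
      filter_upwards [ae_restrict_mem measurableSet_Ioo] with t ht
      exact (hufml t (Ioo_subset_Icc_self ht)).symm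
    have hgmeas : AEMeasurable
        (fun t => ENNReal.ofReal ((k * |u' t| ^ p + ℓ * |u t| ^ p) ^ (1 / p)))
        (volume.restrict (Set.Ioo (0:ℝ) 1)) := by
      fun_prop
    -- a.e. equality
    have haeeq := ae_eq_of_ae_le_of_lintegral_le
      (f := fun t => ENNReal.ofReal (k ^ (1/p) * |u' t|))
      (g := fun t => ENNReal.ofReal ((k * |u' t| ^ p + ℓ * |u t| ^ p) ^ (1 / p)))
      (μ := volume.restrict (Set.Ioo (0:ℝ) 1))
      (ae_of_all _ fun t => ENNReal.ofReal_le_ofReal (hlow _ _)) hMne hgmeas hLM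
    have huzero : ∀ᵐ t ∂(volume.restrict (Set.Ioo (0:ℝ) 1)), u t = 0 := by
      filter_upwards [haeeq] with t ht
      have hsum0 : (0:ℝ) ≤ k * |u' t| ^ p + ℓ * |u t| ^ p := by positivity
      have h1 : k ^ (1/p) * |u' t| = (k * |u' t| ^ p + ℓ * |u t| ^ p) ^ (1/p) :=
        (ENNReal.ofReal_eq_ofReal_iff (by positivity) (by positivity)).1 ht
      have h2 : (k ^ (1/p) * |u' t|) ^ p = k * |u' t| ^ p + ℓ * |u t| ^ p := by
        rw [h1, ← Real.rpow_mul hsum0, one_div_mul_cancel hpne, Real.rpow_one]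
      have h3 : (k ^ (1/p) * |u' t|) ^ p = k * |u' t| ^ p := by
        rw [Real.mul_rpow hK0 (abs_nonneg _), ← Real.rpow_mul hk.le,
          one_div_mul_cancel hpne, Real.rpow_one]
      have h4 : ℓ * |u t| ^ p = 0 := by linarith [h2, h3]
      have h5 : |u t| ^ p = 0 := by
        rcases mul_eq_zero.1 h4 with h | h
        · exact absurd h hℓ0
        · exact h
      have h6 := (Real.rpow_eq_zero (abs_nonneg _) hpne).1 h5
      exact abs_eq_zero.1 h6
    -- contradiction with continuity and u 1 = 1
    set F : ℝ → ℝ := fun t => u 0 + ∫ s in (0:ℝ)..t, u' s with hF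
    have hF1 : F 1 = 1 := by
      have := hufml 1 (by norm_num : (1:ℝ) ∈ Set.Icc (0:ℝ) 1)
      rw [hF]
      simp only
      rw [← this]
      exact hu1
    have hcw : ContinuousWithinAt F (Set.Icc 0 1) 1 := hFcont 1 (by norm_num)
    rw [Metric.continuousWithinAt_iff] at hcw
    obtain ⟨δ, hδ0, hδ⟩ := hcw (1/2) (by norm_num)
    set b : ℝ := max (1 - δ/2) (1/2) with hb
    have hb1 : b < 1 := max_lt (by linarith) (by norm_num)
    have hbhalf : (1:ℝ)/2 ≤ b := le_max_right _ _
    have hsub : Set.Ioo b 1 ⊆ {t | ¬ u t = 0} ∩ Set.Ioo (0:ℝ) 1 := by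
      intro t ht
      have ht0 : (0:ℝ) < t := lt_of_lt_of_le (by norm_num) (hbhalf.trans ht.1.le)
      have ht01 : t ∈ Set.Ioo (0:ℝ) 1 := ⟨ht0, ht.2⟩
      refine ⟨?_, ht01⟩
      intro h0
      have htI : t ∈ Set.Icc (0:ℝ) 1 := ⟨ht0.le, ht.2.le⟩
      have hdist : dist t 1 < δ := by
        rw [Real.dist_eq, abs_of_nonpos (by linarith [ht.2])]
        have : 1 - δ/2 ≤ b := le_max_left _ _
        linarith [ht.1]
      have hd := hδ htI hdist
      rw [hF1] at hd
      have hFt : F t = u t := (hufml t htI).symm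
      rw [hFt, h0, Real.dist_eq] at hd
      norm_num at hd
    have hzmeas : volume.restrict (Set.Ioo (0:ℝ) 1) {t | ¬ u t = 0} = 0 := by
      exact huzero
    rw [Measure.restrict_apply' measurableSet_Ioo] at hzmeas
    have hle := measure_mono (μ := volume) hsub
    rw [hzmeas] at hle
    have hpos : 0 < volume (Set.Ioo b 1) := by
      rw [Real.volume_Ioo]
      exact ENNReal.ofReal_pos.2 (by linarith)
    exact absurd (le_antisymm hle zero_le) (ne_of_gt hpos)
  · -- backward direction: ℓ = 0, minimizer is u(t) = t
    rintro rfl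
    refine ⟨fun t => t, fun _ => 1, ⟨⟨?_, ?_⟩, rfl, rfl⟩, ?_⟩
    · exact integrableOn_const (by rw [Real.volume_Ioo]; exact ENNReal.ofReal_ne_top) enorm_ne_top
    · intro t ht
      simp [intervalIntegral.integral_const]
    · intro v v' hv
      unfold Jace
      apply add_le_add _ le_rfl
      rw [EReal.coe_ennreal_le_coe_ennreal_iff]
      have hid : (∫⁻ t in Set.Ioo (0:ℝ) 1,
          ENNReal.ofReal ((k * |(1:ℝ)| ^ p + 0 * |t| ^ p) ^ (1 / p)))
          = ENNReal.ofReal (k ^ (1/p)) := by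
        have : ∀ t : ℝ, (k * |(1:ℝ)| ^ p + 0 * |t| ^ p) ^ (1 / p) = k ^ (1/p) := by
          intro t
          rw [abs_one, Real.one_rpow, mul_one, zero_mul, add_zero]
        simp only [this]
        rw [setLIntegral_const, Real.volume_Ioo]
        norm_num
      rw [hid]
      calc ENNReal.ofReal (k ^ (1/p))
          ≤ ∫⁻ t in Set.Ioo (0:ℝ) 1, ENNReal.ofReal (k ^ (1/p) * |v' t|) :=
            my_lintegral_lower hv hK0
        _ = ∫⁻ t in Set.Ioo (0:ℝ) 1,
              ENNReal.ofReal ((k * |v' t| ^ p + 0 * |v t| ^ p) ^ (1 / p)) := by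
            apply lintegral_congr
            intro t
            rw [zero_mul, add_zero, my_mul_abs_rpow hk.le hp]
end
end
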